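/- Correctness of hierarchical sampling: with P(p_k) = W(p_k) / ∑_{j=0}^{K-1} W(p_j) and P(v_i | p_k) = (w_i AND 2^k) / W(p_k) (interpreted as 0 when W(p_k) = 0), the law of total probability gives P(v_i) = ∑_{k=0}^{K-1} P(p_k) · P(v_i | p_k) = w_i / ∑_{j=0}^{d-1} w_j. That is, the probability of selecting each neighbor under radix-based two-stage sampling equals its original transition probability. -/
import Mathlib

lemma sum_and_two_pow (K n : ℕ) : ∑ k ∈ Finset.range K, (n &&& 2 ^ k) = n % 2 ^ K := by
  induction K with
  | zero => simp [Nat.mod_one]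
  | succ K ih =>
    rw [Finset.sum_range_succ, ih, Nat.and_two_pow, Nat.testBit_eq_decide_div_mod_eq]
    rw [pow_succ, Nat.mod_mul]
    rcases Nat.mod_two_eq_zero_or_one (n / 2 ^ K) with h | h <;> simp [h]

theorem hierarchical_sampling_correct (d K : ℕ) (hd : 0 < d) (hK : 0 < K)
    (w : Fin d → ℕ) (hw : ∀ i, w i < 2 ^ K) (hpos : 0 < ∑ i, w i)
    (W : ℕ → ℚ) (hW : ∀ k, W k = ∑ i, ((w i &&& 2 ^ k : ℕ) : ℚ)) (i : Fin d) :
    ∑ k ∈ Finset.range K,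
        (W k / ∑ j ∈ Finset.range K, W j) * (((w i &&& 2 ^ k : ℕ) : ℚ) / W k)
      = (w i : ℚ) / ((∑ j, w j : ℕ) : ℚ) := by
  have hsum : ∀ m : ℕ, m < 2 ^ K → ∑ k ∈ Finset.range K, (m &&& 2 ^ k) = m := by
    intro m hm; rw [sum_and_two_pow, Nat.mod_eq_of_lt hm]
  have hS : (∑ j ∈ Finset.range K, W j) = ((∑ j, w j : ℕ) : ℚ) := by
    simp only [hW]
    rw [Finset.sum_comm]
    push_cast
    congr 1; ext j
    rw [← Nat.cast_sum, hsum (w j) (hw j)]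
  have hterm : ∀ k, (W k / ∑ j ∈ Finset.range K, W j) * (((w i &&& 2 ^ k : ℕ) : ℚ) / W k)
      = ((w i &&& 2 ^ k : ℕ) : ℚ) / ((∑ j, w j : ℕ) : ℚ) := by
    intro k
    by_cases h : W k = 0
    · have : ((w i &&& 2 ^ k : ℕ) : ℚ) = 0 := by
        have := hW k
        have hle : ((w i &&& 2 ^ k : ℕ) : ℚ) ≤ W k := by
          rw [hW k]
          exact Finset.single_le_sum (f := fun j => ((w j &&& 2 ^ k : ℕ) : ℚ))
            (fun j _ => by positivity) (Finset.mem_univ i)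
        have hge : (0:ℚ) ≤ ((w i &&& 2 ^ k : ℕ) : ℚ) := by positivity
        linarith [hle, h ▸ hle]
      simp [h, this]
    · rw [hS, div_mul_div_comm, mul_comm (W k), mul_div_mul_right _ _ h]
  rw [Finset.sum_congr rfl (fun k _ => hterm k), ← Finset.sum_div, ← Nat.cast_sum,
    hsum (w i) (hw i)]
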